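/- arXiv:1108.4246 — 4 statements merged into one kernel-verified Lean document; each statement's English description precedes it below -/
import Mathlib

section
/- Define R_d(ρ) := ∫₀^∞ (√ρ − √f(e))_+² de where f(e) = (|S^{d−1}|/(d(2π)^d))·((1+e)^{d/2} − (1−e)_+^{d/2}). Then R_d(ρ) ~ ((2π)^d/(6|S^{d−1}|))·ρ² as ρ → 0⁺, i.e., the ratio R_d(ρ)/ρ² tends to (2π)^d/(6|S^{d−1}|). -/
open MeasureTheory Real

/-- The surface area `|S^{d-1}|` of the unit sphere in `ℝ^d`, expressed as
`d` times the volume of the unit ball. -/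
noncomputable def sphereArea (d : ℕ) : ℝ :=
  d * (volume (Metric.ball (0 : EuclideanSpace ℝ (Fin d)) 1)).toReal

/-- `f(e) = (|S^{d−1}|/(d(2π)^d)) ((1+e)^{d/2} − (1−e)_+^{d/2})`. -/
noncomputable def fvol (d : ℕ) (e : ℝ) : ℝ :=
  sphereArea d / (d * (2 * π) ^ d)
    * ((1 + e) ^ ((d : ℝ) / 2) - (max (1 - e) 0) ^ ((d : ℝ) / 2))

/-- `R_d(ρ) = ∫₀^∞ (√ρ − √f(e))_+² de`. -/
noncomputable def Rfun (d : ℕ) (ρ : ℝ) : ℝ :=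
  ∫ e in Set.Ioi (0 : ℝ), (max (Real.sqrt ρ - Real.sqrt (fvol d e)) 0) ^ 2

open Set Filter Topology

lemma sphereArea_pos (d : ℕ) (hd : 1 ≤ d) : 0 < sphereArea d := by
  have h1 : 0 < volume (Metric.ball (0 : EuclideanSpace ℝ (Fin d)) 1) :=
    Metric.measure_ball_pos _ _ one_pos
  have h2 : volume (Metric.ball (0 : EuclideanSpace ℝ (Fin d)) 1) < ⊤ :=
    measure_ball_lt_top
  have h3 : 0 < (volume (Metric.ball (0 : EuclideanSpace ℝ (Fin d)) 1)).toReal :=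
    ENNReal.toReal_pos h1.ne' h2.ne
  have hdR : (0:ℝ) < d := by exact_mod_cast Nat.lt_of_lt_of_le Nat.zero_lt_one hd
  exact mul_pos hdR h3

lemma fvol_lower_lin (d : ℕ) (hd : 1 ≤ d) {e : ℝ} (h0 : 0 ≤ e) (h1 : e ≤ 1) :
    sphereArea d / (d * (2 * π) ^ d) * (2 * e / 3) ≤ fvol d e := by
  have hC : 0 ≤ sphereArea d / (d * (2 * π) ^ d) :=
    div_nonneg (sphereArea_pos d hd).le (by positivity)
  set x := Real.sqrt (1 + e) with hx
  set y := Real.sqrt (1 - e) with hy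
  have hx2 : x ^ 2 = 1 + e := Real.sq_sqrt (by linarith)
  have hy2 : y ^ 2 = 1 - e := Real.sq_sqrt (by linarith)
  have hx1 : 1 ≤ x := by
    rw [show (1:ℝ) = Real.sqrt 1 from Real.sqrt_one.symm, hx]
    exact Real.sqrt_le_sqrt (by linarith)
  have hy0 : 0 ≤ y := Real.sqrt_nonneg _
  have hy1 : y ≤ 1 := by
    rw [show (1:ℝ) = Real.sqrt 1 from Real.sqrt_one.symm, hy]
    exact Real.sqrt_le_sqrt (by linarith)
  have hx3 : x ≤ 2 := by nlinarith
  have hxy : 2 * e / 3 ≤ x - y := by nlinarith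
  have hpowx : x ≤ x ^ d := le_self_pow₀ hx1 (by omega)
  have hpowy : y ^ d ≤ y := pow_le_of_le_one hy0 hy1 (by omega)
  have hmax : max (1 - e) 0 = 1 - e := max_eq_left (by linarith)
  have hrw : fvol d e = sphereArea d / (d * (2 * π) ^ d) * (x ^ d - y ^ d) := by
    rw [fvol, hmax, Real.rpow_div_two_eq_sqrt _ (by linarith : (0:ℝ) ≤ 1 + e),
      Real.rpow_div_two_eq_sqrt _ (by linarith : (0:ℝ) ≤ 1 - e),
      Real.rpow_natCast, Real.rpow_natCast]
  rw [hrw]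
  apply mul_le_mul_of_nonneg_left _ hC
  linarith

lemma fvol_ge_of_one_le (d : ℕ) (hd : 1 ≤ d) {e : ℝ} (h : 1 ≤ e) :
    sphereArea d / (d * (2 * π) ^ d) ≤ fvol d e := by
  have hC : 0 ≤ sphereArea d / (d * (2 * π) ^ d) :=
    div_nonneg (sphereArea_pos d hd).le (by positivity)
  have hmax : max (1 - e) 0 = 0 := max_eq_right (by linarith)
  have hdne : ((d:ℝ)/2) ≠ 0 := by
    have : (0:ℝ) < d := by exact_mod_cast Nat.lt_of_lt_of_le Nat.zero_lt_one hd
    positivity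
  have hone : (1:ℝ) ≤ (1 + e) ^ ((d:ℝ)/2) := Real.one_le_rpow (by linarith) (by positivity)
  rw [fvol, hmax, Real.zero_rpow hdne]
  nlinarith

lemma continuous_fvol (d : ℕ) : Continuous (fvol d) := by
  have hp : (0:ℝ) ≤ (d:ℝ)/2 := by positivity
  apply Continuous.mul continuous_const
  apply Continuous.sub
  · exact (continuous_const.add continuous_id).rpow_const fun _ => Or.inr hp
  · exact ((continuous_const.sub continuous_id).max continuous_const).rpow_const
      fun _ => Or.inr hp

lemma fvol_zero (d : ℕ) : fvol d 0 = 0 := by simp [fvol]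

lemma hasDerivAt_fvol (d : ℕ) (hd : 1 ≤ d) :
    HasDerivAt (fvol d) (sphereArea d / (2 * π) ^ d) 0 := by
  have hdR : (0:ℝ) < d := by exact_mod_cast Nat.lt_of_lt_of_le Nat.zero_lt_one hd
  have h1 : HasDerivAt (fun e : ℝ => (1 + e) ^ ((d:ℝ)/2)) ((d:ℝ)/2) 0 := by
    have hbase : HasDerivAt (fun e : ℝ => 1 + e) 1 0 := (hasDerivAt_id 0).const_add 1
    have := hbase.rpow_const (p := (d:ℝ)/2) (Or.inl (by norm_num))
    simpa using this
  have h2 : HasDerivAt (fun e : ℝ => (1 - e) ^ ((d:ℝ)/2)) (-((d:ℝ)/2)) 0 := by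
    have hbase : HasDerivAt (fun e : ℝ => 1 - e) (-1) 0 := (hasDerivAt_id 0).const_sub 1
    have := hbase.rpow_const (p := (d:ℝ)/2) (Or.inl (by norm_num))
    simpa using this
  have h3 := ((h1.sub h2).const_mul (sphereArea d / (d * (2 * π) ^ d)))
  have heq : (fun e : ℝ => sphereArea d / (d * (2 * π) ^ d)
      * ((1 + e) ^ ((d:ℝ)/2) - (1 - e) ^ ((d:ℝ)/2))) =ᶠ[𝓝 (0:ℝ)] fvol d := by
    filter_upwards [Iio_mem_nhds (show (0:ℝ) < 1 from one_pos)] with e he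
    rw [fvol, max_eq_left (by linarith [mem_Iio.mp he] : (0:ℝ) ≤ 1 - e)]
  have h4 := h3.congr_of_eventuallyEq heq.symm
  refine h4.congr_deriv ?_
  have hπ : ((2:ℝ) * π) ^ d ≠ 0 := by positivity
  rw [sub_neg_eq_add, add_halves, div_mul_eq_mul_div, mul_comm (d:ℝ) ((2 * π) ^ d),
    mul_div_mul_right _ _ hdR.ne']

/-- `R_d(ρ) ~ ((2π)^d/(6|S^{d−1}|)) ρ²` as `ρ → 0⁺`. -/
theorem Rfun_asymptotics_zero (d : ℕ) (hd : 1 ≤ d) :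
    Filter.Tendsto (fun ρ : ℝ => Rfun d ρ / ρ ^ 2) (nhdsWithin 0 (Set.Ioi 0))
      (nhds ((2 * π) ^ d / (6 * sphereArea d))) := by
  have hS := sphereArea_pos d hd
  have hdR : (0:ℝ) < d := by exact_mod_cast Nat.lt_of_lt_of_le Nat.zero_lt_one hd
  have hπ : (0:ℝ) < (2 * π) ^ d := by positivity
  set C := sphereArea d / (d * (2 * π) ^ d) with hC
  have hC0 : 0 < C := div_pos hS (by positivity)
  set a := sphereArea d / (2 * π) ^ d with ha
  have ha0 : 0 < a := div_pos hS hπ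
  set M := 3 / (2 * C) with hM
  have hM0 : 0 < M := by positivity
  set f : ℝ → ℝ := fun u => (max (1 - Real.sqrt (a * u)) 0) ^ 2 with hf
  set F : ℝ → ℝ → ℝ := fun ρ u => (max (1 - Real.sqrt (fvol d (ρ * u) / ρ)) 0) ^ 2 with hF
  -- step 1 : substitution
  have key : ∀ ρ ∈ Ioi (0:ℝ), Rfun d ρ / ρ ^ 2 = ∫ u in Ioi (0:ℝ), F ρ u := by
    intro ρ hρ
    have hρ0 : 0 < ρ := hρ
    have hsub := integral_comp_mul_left_Ioi
      (fun e => (max (Real.sqrt ρ - Real.sqrt (fvol d e)) 0) ^ 2) 0 hρ0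
    rw [mul_zero] at hsub
    have h2 : ∀ u : ℝ, (max (Real.sqrt ρ - Real.sqrt (fvol d (ρ * u))) 0) ^ 2
        = ρ * F ρ u := by
      intro u
      have hfe : fvol d (ρ * u) = ρ * (fvol d (ρ * u) / ρ) := by
        field_simp
      have hsq : Real.sqrt (fvol d (ρ * u)) = Real.sqrt ρ * Real.sqrt (fvol d (ρ * u) / ρ) := by
        rw [hfe, Real.sqrt_mul hρ0.le]
        congr 1
        rw [← hfe]
      have hmm : max (Real.sqrt ρ - Real.sqrt (fvol d (ρ * u))) 0
          = Real.sqrt ρ * max (1 - Real.sqrt (fvol d (ρ * u) / ρ)) 0 := by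
        rw [mul_max_of_nonneg _ _ (Real.sqrt_nonneg ρ), mul_zero, hsq]
        ring_nf
      rw [hmm, mul_pow, Real.sq_sqrt hρ0.le]
    have h3 : (∫ u in Ioi (0:ℝ), (max (Real.sqrt ρ - Real.sqrt (fvol d (ρ * u))) 0) ^ 2)
        = ρ * ∫ u in Ioi (0:ℝ), F ρ u := by
      rw [show (fun u => (max (Real.sqrt ρ - Real.sqrt (fvol d (ρ * u))) 0) ^ 2)
          = fun u => ρ * F ρ u from funext h2]
      exact integral_const_mul ρ _
    have h4 : Rfun d ρ = ρ * (ρ * ∫ u in Ioi (0:ℝ), F ρ u) := by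
      rw [Rfun, ← h3, hsub, smul_eq_mul, ← mul_assoc, mul_inv_cancel₀ hρ0.ne', one_mul]
    rw [h4]
    field_simp
  -- step 2 : dominated convergence
  have hbound_int : Integrable ((Ioc (0:ℝ) M).indicator fun _ => (1:ℝ))
      (volume.restrict (Ioi 0)) := by
    rw [integrable_indicator_iff measurableSet_Ioc]
    refine integrableOn_const ?_
    exact (lt_of_le_of_lt (Measure.restrict_apply_le _ _) measure_Ioc_lt_top).ne
  have hmeas : ∀ᶠ ρ in 𝓝[>] (0:ℝ), AEStronglyMeasurable (F ρ) (volume.restrict (Ioi 0)) := by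
    refine Eventually.of_forall fun ρ => Continuous.aestronglyMeasurable ?_
    exact (((continuous_const.sub (Real.continuous_sqrt.comp
      (((continuous_fvol d).comp (continuous_const.mul continuous_id)).div_const ρ))).max
      continuous_const).pow 2)
  have hbound : ∀ᶠ ρ in 𝓝[>] (0:ℝ), ∀ᵐ u ∂(volume.restrict (Ioi (0:ℝ))),
      ‖F ρ u‖ ≤ (Ioc (0:ℝ) M).indicator (fun _ => (1:ℝ)) u := by
    filter_upwards [Ioo_mem_nhdsGT_of_mem (left_mem_Ico.2 hC0)] with ρ hρ
    rw [ae_restrict_iff' measurableSet_Ioi]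
    refine ae_of_all _ fun u hu => ?_
    have hu0 : 0 < u := hu
    have hFnn : 0 ≤ F ρ u := sq_nonneg _
    rw [Real.norm_eq_abs, abs_of_nonneg hFnn]
    by_cases hcase : u ≤ M
    · rw [indicator_of_mem (show u ∈ Ioc (0:ℝ) M from ⟨hu0, hcase⟩) _]
      have h1 : max (1 - Real.sqrt (fvol d (ρ * u) / ρ)) 0 ≤ 1 :=
        max_le (by linarith [Real.sqrt_nonneg (fvol d (ρ * u) / ρ)]) zero_le_one
      have h0 : (0:ℝ) ≤ max (1 - Real.sqrt (fvol d (ρ * u) / ρ)) 0 := le_max_right _ _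
      rw [hF]
      nlinarith
    · push_neg at hcase
      rw [indicator_of_notMem (fun h => absurd h.2 (not_le.2 hcase))]
      have hfv : ρ ≤ fvol d (ρ * u) := by
        rcases le_or_gt (ρ * u) 1 with h1 | h1
        · have hlow := fvol_lower_lin d hd (mul_nonneg hρ.1.le hu0.le) h1
          rw [← hC] at hlow
          have : ρ ≤ C * (2 * (ρ * u) / 3) := by
            rw [hM] at hcase
            rw [div_lt_iff₀ (by positivity)] at hcase
            nlinarith [hρ.1]
          linarith
        · exact le_trans hρ.2.le (fvol_ge_of_one_le d hd h1.le)
      have hs1 : 1 ≤ Real.sqrt (fvol d (ρ * u) / ρ) := by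
        rw [show (1:ℝ) = Real.sqrt 1 from Real.sqrt_one.symm]
        exact Real.sqrt_le_sqrt ((le_div_iff₀ hρ.1).2 (by linarith))
      have : max (1 - Real.sqrt (fvol d (ρ * u) / ρ)) 0 = 0 := max_eq_right (by linarith)
      rw [hF]
      simp only [this]
      norm_num
  have hlimpt : ∀ᵐ u ∂(volume.restrict (Ioi (0:ℝ))),
      Tendsto (fun ρ => F ρ u) (𝓝[>] (0:ℝ)) (𝓝 (f u)) := by
    rw [ae_restrict_iff' measurableSet_Ioi]
    refine ae_of_all _ fun u hu => ?_
    have hu0 : 0 < u := hu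
    have hslope : Tendsto (fun e => fvol d e / e) (𝓝[≠] (0:ℝ)) (𝓝 a) := by
      have h := hasDerivAt_fvol d hd
      rw [hasDerivAt_iff_tendsto_slope] at h
      have hs : slope (fvol d) 0 = fun e => fvol d e / e := by
        funext e
        simp [slope_def_field, fvol_zero d]
      rw [hs] at h
      exact h
    have hmul : Tendsto (fun ρ : ℝ => ρ * u) (𝓝[>] (0:ℝ)) (𝓝[≠] (0:ℝ)) := by
      apply tendsto_nhdsWithin_of_tendsto_nhds_of_eventually_within
      · have h0 := (continuous_mul_right u).tendsto (0:ℝ)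
        rw [zero_mul] at h0
        exact h0.mono_left nhdsWithin_le_nhds
      · filter_upwards [self_mem_nhdsWithin] with ρ hρ
        exact (mul_pos hρ hu0).ne'
    have h1 : Tendsto (fun ρ : ℝ => fvol d (ρ * u) / (ρ * u)) (𝓝[>] (0:ℝ)) (𝓝 a) :=
      hslope.comp hmul
    have h2 : Tendsto (fun ρ : ℝ => fvol d (ρ * u) / ρ) (𝓝[>] (0:ℝ)) (𝓝 (a * u)) := by
      have h2' := h1.const_mul u
      rw [mul_comm u a] at h2'
      refine h2'.congr' ?_
      filter_upwards [self_mem_nhdsWithin] with ρ hρ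
      have hρ0 : (ρ:ℝ) ≠ 0 := (ne_of_gt hρ)
      field_simp
    have hcont : Continuous fun t : ℝ => (max (1 - Real.sqrt t) 0) ^ 2 :=
      ((continuous_const.sub Real.continuous_sqrt).max continuous_const).pow 2
    exact (hcont.tendsto (a * u)).comp h2
  have hDCT : Tendsto (fun ρ => ∫ u in Ioi (0:ℝ), F ρ u) (𝓝[>] (0:ℝ))
      (𝓝 (∫ u in Ioi (0:ℝ), f u)) :=
    tendsto_integral_filter_of_dominated_convergence _ hmeas hbound hbound_int hlimpt
  -- step 3 : value of the limit integral
  have hval : (∫ u in Ioi (0:ℝ), f u) = (2 * π) ^ d / (6 * sphereArea d) := by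
    set b := a⁻¹ with hb
    have hb0 : 0 < b := inv_pos.2 ha0
    have hab : a * b = 1 := mul_inv_cancel₀ ha0.ne'
    have step1 : (∫ u in Ioi (0:ℝ), f u) = ∫ u in Ioi (0:ℝ), (Ioc 0 b).indicator f u := by
      refine setIntegral_congr_fun measurableSet_Ioi fun u hu => ?_
      have hu0 : 0 < u := hu
      by_cases hc : u ≤ b
      · rw [indicator_of_mem (show u ∈ Ioc (0:ℝ) b from ⟨hu0, hc⟩) f]
      · push_neg at hc
        rw [indicator_of_notMem (fun h => absurd h.2 (not_le.2 hc))]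
        have h1 : 1 ≤ a * u := by
          rw [← hab]
          exact mul_le_mul_of_nonneg_left hc.le ha0.le
        have hs : 1 ≤ Real.sqrt (a * u) := by
          rw [show (1:ℝ) = Real.sqrt 1 from Real.sqrt_one.symm]
          exact Real.sqrt_le_sqrt h1
        rw [hf]
        simp only [max_eq_right (by linarith : 1 - Real.sqrt (a * u) ≤ 0)]
        norm_num
    have step2 : (∫ u in Ioi (0:ℝ), (Ioc 0 b).indicator f u) = ∫ u in Ioc (0:ℝ) b, f u := by
      rw [setIntegral_indicator measurableSet_Ioc,
        inter_eq_self_of_subset_right Ioc_subset_Ioi_self]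
    have step3 : (∫ u in Ioc (0:ℝ) b, f u) = ∫ u in (0:ℝ)..b, f u :=
      (intervalIntegral.integral_of_le hb0.le).symm
    have step4 : (∫ u in (0:ℝ)..b, f u)
        = ∫ u in (0:ℝ)..b, (1 - 2 * (Real.sqrt a * Real.sqrt u) + a * u) := by
      refine intervalIntegral.integral_congr fun u hu => ?_
      rw [uIcc_of_le hb0.le] at hu
      have hu0 : 0 ≤ u := hu.1
      have hau : a * u ≤ 1 := by
        rw [← hab]
        exact mul_le_mul_of_nonneg_left hu.2 ha0.le
      have hs1 : Real.sqrt (a * u) ≤ 1 := Real.sqrt_le_one.2 hau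
      rw [hf]
      simp only [max_eq_left (by linarith : (0:ℝ) ≤ 1 - Real.sqrt (a * u))]
      rw [sub_sq, one_pow, mul_one, Real.sq_sqrt (mul_nonneg ha0.le hu0),
        Real.sqrt_mul ha0.le]
    have hsqrt_int : (∫ u in (0:ℝ)..b, Real.sqrt u) = 2 / 3 * b ^ ((3:ℝ)/2) := by
      have hcong : (∫ u in (0:ℝ)..b, Real.sqrt u)
          = ∫ u in (0:ℝ)..b, u ^ ((1:ℝ)/2) := by
        refine intervalIntegral.integral_congr fun u hu => Real.sqrt_eq_rpow u
      rw [hcong, integral_rpow (Or.inl (by norm_num))]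
      rw [Real.zero_rpow (by norm_num)]
      norm_num
      ring
    have hint1 : IntervalIntegrable (fun _ : ℝ => (1:ℝ)) volume 0 b :=
      intervalIntegrable_const
    have hint2 : IntervalIntegrable (fun u => 2 * (Real.sqrt a * Real.sqrt u)) volume 0 b :=
      (continuous_const.mul (continuous_const.mul Real.continuous_sqrt)).intervalIntegrable 0 b
    have hint3 : IntervalIntegrable (fun u : ℝ => a * u) volume 0 b :=
      (continuous_const.mul continuous_id).intervalIntegrable 0 b
    have step5 : (∫ u in (0:ℝ)..b, (1 - 2 * (Real.sqrt a * Real.sqrt u) + a * u))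
        = b - 4/3 * (Real.sqrt a * b ^ ((3:ℝ)/2)) + a * b ^ 2 / 2 := by
      rw [intervalIntegral.integral_add (hint1.sub hint2) hint3,
        intervalIntegral.integral_sub hint1 hint2,
        intervalIntegral.integral_const, intervalIntegral.integral_const_mul,
        intervalIntegral.integral_const_mul, hsqrt_int,
        intervalIntegral.integral_const_mul, integral_id, smul_eq_mul]
      ring
    have hsab : Real.sqrt a * b ^ ((3:ℝ)/2) = b := by
      rw [hb, Real.sqrt_eq_rpow, Real.inv_rpow ha0.le, ← div_eq_mul_inv,
        ← Real.rpow_sub ha0]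
      norm_num [Real.rpow_neg_one]
    have hab2 : a * b ^ 2 = b := by
      rw [hb]
      field_simp
    rw [step1, step2, step3, step4, step5, hsab, hab2]
    have : b - 4/3 * b + b / 2 = b / 6 := by ring
    rw [this, hb, ha]
    field_simp
  rw [← hval]
  refine Tendsto.congr' ?_ hDCT
  filter_upwards [self_mem_nhdsWithin] with ρ hρ
  exact (key ρ hρ).symm
end

section
/- With R_d and f as above, R_d(ρ) ~ (d/(d+4))·K_sc(d)·ρ^{1+2/d} as ρ → ∞, where K_sc(d) = (d/(d+2))·(d(2π)^d/|S^{d−1}|)^{2/d} is the semiclassical constant (with q = 1). -/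
open MeasureTheory Real

/-- The semiclassical constant `K_sc(d)` (with `q = 1`). -/
noncomputable def Ksc (d : ℕ) : ℝ :=
  ((d : ℝ) / (d + 2)) * (d * (2 * π) ^ d / sphereArea d) ^ (2 / (d : ℝ))

private lemma maxsq_le {ρ f : ℝ} (hρ : 0 ≤ ρ) : (max (Real.sqrt ρ - Real.sqrt f) 0)^2 ≤ ρ := by
  have h0 : (0:ℝ) ≤ max (Real.sqrt ρ - Real.sqrt f) 0 := le_max_right _ _
  have h1 : max (Real.sqrt ρ - Real.sqrt f) 0 ≤ Real.sqrt ρ :=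
    max_le (by linarith [Real.sqrt_nonneg f]) (Real.sqrt_nonneg ρ)
  calc (max (Real.sqrt ρ - Real.sqrt f) 0)^2 ≤ (Real.sqrt ρ)^2 := pow_le_pow_left₀ h0 h1 2
  _ = ρ := Real.sq_sqrt hρ

private lemma maxsq_zero {ρ f : ℝ} (h : ρ ≤ f) : (max (Real.sqrt ρ - Real.sqrt f) 0)^2 = 0 := by
  have : Real.sqrt ρ ≤ Real.sqrt f := Real.sqrt_le_sqrt h
  rw [max_eq_right (by linarith)]
  ring

private lemma integrableOn_cut {ρ E₀ : ℝ} (hρ : 0 ≤ ρ) {φ : ℝ → ℝ} (hφ : Measurable φ)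
    (h0 : ∀ x, E₀ < x → ρ ≤ φ x) :
    IntegrableOn (fun x => (max (Real.sqrt ρ - Real.sqrt (φ x)) 0)^2) (Set.Ioi (0:ℝ)) := by
  have hmeas : Measurable fun x => (max (Real.sqrt ρ - Real.sqrt (φ x)) 0)^2 :=
    ((measurable_const.sub hφ.sqrt).max measurable_const).pow_const 2
  refine Integrable.mono' (g := fun x => Set.indicator (Set.Ioc 0 E₀) (fun _ => ρ) x) ?_
    hmeas.aestronglyMeasurable ?_
  · rw [integrable_indicator_iff measurableSet_Ioc]
    exact integrableOn_const (lt_of_le_of_lt (Measure.restrict_apply_le _ _)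
      measure_Ioc_lt_top).ne
  · filter_upwards [ae_restrict_mem measurableSet_Ioi] with x hx
    by_cases hxE : x ≤ E₀
    · rw [Set.indicator_of_mem (Set.mem_Ioc.mpr ⟨hx, hxE⟩), Real.norm_eq_abs,
        abs_of_nonneg (sq_nonneg _)]
      exact maxsq_le hρ
    · rw [Set.indicator_of_notMem (by simp [hxE]), maxsq_zero (h0 x (lt_of_not_ge hxE))]
      simp

private lemma N_eval {c ρ p : ℝ} (hc : 0 < c) (hρ : 0 < ρ) (hp : 0 < p)
    (hint : IntegrableOn (fun x => (max (Real.sqrt ρ - Real.sqrt (c * x ^ (p/2))) 0)^2)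
      (Set.Ioi (0:ℝ))) :
    ∫ x in Set.Ioi (0:ℝ), (max (Real.sqrt ρ - Real.sqrt (c * x ^ (p/2))) 0)^2
      = (p^2 / ((p+2)*(p+4))) * c ^ (-(2/p)) * ρ ^ (1+2/p) := by
  have hb : (0:ℝ) < ρ / c := div_pos hρ hc
  set X : ℝ := (ρ/c) ^ (2/p) with hXdef
  have hX : 0 < X := Real.rpow_pos_of_pos hb _
  have hXhalf : X ^ (p/2) = ρ / c := by
    rw [hXdef, ← Real.rpow_mul hb.le]
    rw [show (2/p) * (p/2) = 1 by field_simp]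
    exact Real.rpow_one _
  -- split the domain
  rw [← Set.Ioc_union_Ioi_eq_Ioi hX.le,
    setIntegral_union (Set.Ioc_disjoint_Ioi le_rfl) measurableSet_Ioi
      (hint.mono_set Set.Ioc_subset_Ioi_self) (hint.mono_set (Set.Ioi_subset_Ioi hX.le))]
  have hzero : ∫ x in Set.Ioi X, (max (Real.sqrt ρ - Real.sqrt (c * x ^ (p/2))) 0)^2 = 0 := by
    rw [setIntegral_congr_fun measurableSet_Ioi (g := fun _ => (0:ℝ)) ?_, integral_zero]
    intro x hx
    have hx0 : (0:ℝ) < x := lt_trans hX hx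
    refine maxsq_zero ?_
    have h1 : X ^ (p/2) ≤ x ^ (p/2) :=
      Real.rpow_le_rpow hX.le (le_of_lt hx) (by positivity)
    rw [hXhalf] at h1
    calc ρ = c * (ρ/c) := by field_simp
    _ ≤ c * x ^ (p/2) := by nlinarith
  rw [hzero, add_zero]
  have hcongr : Set.EqOn (fun x => (max (Real.sqrt ρ - Real.sqrt (c * x ^ (p/2))) 0)^2)
      (fun x => ρ - (2*(Real.sqrt ρ * Real.sqrt c)) * x ^ (p/4) + c * x ^ (p/2))
      (Set.Ioc 0 X) := by
    intro x hx
    obtain ⟨hx0, hxX⟩ := hx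
    have hle : c * x ^ (p/2) ≤ ρ := by
      have h1 : x ^ (p/2) ≤ X ^ (p/2) := Real.rpow_le_rpow hx0.le hxX (by positivity)
      rw [hXhalf] at h1
      calc c * x ^ (p/2) ≤ c * (ρ/c) := by nlinarith
      _ = ρ := by field_simp
    have hsq : Real.sqrt (c * x ^ (p/2)) = Real.sqrt c * x ^ (p/4) := by
      rw [Real.sqrt_mul hc.le, Real.sqrt_eq_rpow (x ^ (p/2)), ← Real.rpow_mul hx0.le,
        show p/2 * (1/2:ℝ) = p/4 by ring]
    have hpos : 0 ≤ Real.sqrt ρ - Real.sqrt (c * x ^ (p/2)) := by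
      have := Real.sqrt_le_sqrt hle
      linarith
    simp only
    rw [max_eq_left hpos, hsq]
    have h1 : Real.sqrt ρ ^ 2 = ρ := Real.sq_sqrt hρ.le
    have h2 : Real.sqrt c ^ 2 = c := Real.sq_sqrt hc.le
    have h3 : (x ^ (p/4))^2 = x ^ (p/2) := by
      rw [sq, ← Real.rpow_add hx0, show p/4 + p/4 = p/2 by ring]
    have expand : (Real.sqrt ρ - Real.sqrt c * x ^ (p/4))^2
        = Real.sqrt ρ^2 - 2*(Real.sqrt ρ*Real.sqrt c)*x^(p/4)
          + Real.sqrt c^2 * (x^(p/4))^2 := by ring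
    rw [expand, h1, h3, h2]
  rw [setIntegral_congr_fun measurableSet_Ioc hcongr,
      ← intervalIntegral.integral_of_le hX.le]
  have i1 : IntervalIntegrable (fun _ : ℝ => ρ) volume 0 X := intervalIntegrable_const
  have i2 : IntervalIntegrable (fun x : ℝ => x ^ (p/4)) volume 0 X :=
    intervalIntegral.intervalIntegrable_rpow' (by linarith)
  have i3 : IntervalIntegrable (fun x : ℝ => x ^ (p/2)) volume 0 X :=
    intervalIntegral.intervalIntegrable_rpow' (by linarith)
  rw [intervalIntegral.integral_add (i1.sub (i2.const_mul _)) (i3.const_mul c),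
      intervalIntegral.integral_sub i1 (i2.const_mul _),
      intervalIntegral.integral_const,
      intervalIntegral.integral_const_mul, intervalIntegral.integral_const_mul,
      integral_rpow (Or.inl (by linarith : (-1:ℝ) < p/4)),
      integral_rpow (Or.inl (by linarith : (-1:ℝ) < p/2)),
      Real.zero_rpow (by positivity : p/4 + 1 ≠ 0),
      Real.zero_rpow (by positivity : p/2 + 1 ≠ 0)]
  -- algebra
  have hXsplit : ∀ t : ℝ, (ρ/c) ^ t = ρ ^ t * c ^ (-t) := by
    intro t
    rw [Real.div_rpow hρ.le hc.le, Real.rpow_neg hc.le, div_eq_mul_inv]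
  have hA : X * ρ = ρ ^ (1+2/p) * c ^ (-(2/p)) := by
    rw [hXdef, hXsplit, Real.rpow_add hρ, Real.rpow_one]
    ring
  have hB : Real.sqrt ρ * Real.sqrt c * X ^ (p/4+1) = ρ ^ (1+2/p) * c ^ (-(2/p)) := by
    have e2 : X ^ (p/4+1) = ρ ^ ((1:ℝ)/2+2/p) * c ^ (-((1:ℝ)/2+2/p)) := by
      rw [hXdef, ← Real.rpow_mul hb.le, show (2/p)*(p/4+1) = (1:ℝ)/2+2/p by field_simp; ring,
        hXsplit]
    have m1 : ρ ^ ((1:ℝ)/2) * ρ ^ ((1:ℝ)/2+2/p) = ρ ^ (1+2/p) := by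
      rw [← Real.rpow_add hρ]; congr 1; ring
    have m2 : c ^ ((1:ℝ)/2) * c ^ (-((1:ℝ)/2+2/p)) = c ^ (-(2/p)) := by
      rw [← Real.rpow_add hc]; congr 1; ring
    calc Real.sqrt ρ * Real.sqrt c * X ^ (p/4+1)
        = (ρ ^ ((1:ℝ)/2) * ρ ^ ((1:ℝ)/2+2/p)) * (c ^ ((1:ℝ)/2) * c ^ (-((1:ℝ)/2+2/p))) := by
          rw [Real.sqrt_eq_rpow, Real.sqrt_eq_rpow, e2]; ring
    _ = ρ ^ (1+2/p) * c ^ (-(2/p)) := by rw [m1, m2]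
  have hC : c * X ^ (p/2+1) = ρ ^ (1+2/p) * c ^ (-(2/p)) := by
    have e3 : X ^ (p/2+1) = ρ ^ (1+2/p) * c ^ (-(1+2/p)) := by
      rw [hXdef, ← Real.rpow_mul hb.le, show (2/p)*(p/2+1) = 1+2/p by field_simp, hXsplit]
    have m3 : c * c ^ (-(1+2/p)) = c ^ (-(2/p)) := by
      rw [show c * c ^ (-(1+2/p)) = c ^ (1:ℝ) * c ^ (-(1+2/p)) by rw [Real.rpow_one],
        ← Real.rpow_add hc]
      congr 1; ring
    calc c * X ^ (p/2+1) = ρ ^ (1+2/p) * (c * c ^ (-(1+2/p))) := by rw [e3]; ring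
    _ = ρ ^ (1+2/p) * c ^ (-(2/p)) := by rw [m3]
  have h24 : p/4 + 1 ≠ 0 := by positivity
  have h22 : p/2 + 1 ≠ 0 := by positivity
  have hp2 : p + 2 ≠ 0 := by positivity
  have hp4 : p + 4 ≠ 0 := by positivity
  calc (X - 0) • ρ - 2*(Real.sqrt ρ * Real.sqrt c) * ((X ^ (p/4+1) - 0)/(p/4+1))
        + c * ((X ^ (p/2+1) - 0)/(p/2+1))
      = (X * ρ) - (2/(p/4+1)) * (Real.sqrt ρ * Real.sqrt c * X ^ (p/4+1))
        + (1/(p/2+1)) * (c * X ^ (p/2+1)) := by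
        rw [smul_eq_mul]; ring
  _ = (ρ ^ (1+2/p) * c ^ (-(2/p))) - (2/(p/4+1)) * (ρ ^ (1+2/p) * c ^ (-(2/p)))
        + (1/(p/2+1)) * (ρ ^ (1+2/p) * c ^ (-(2/p))) := by rw [hA, hB, hC]
  _ = (p^2 / ((p+2)*(p+4))) * c ^ (-(2/p)) * ρ ^ (1+2/p) := by
        field_simp
        ring

private lemma c_pos (d : ℕ) (hd : 1 ≤ d) : 0 < sphereArea d / (↑d * (2 * π) ^ d) := by
  have hball : 0 < (volume (Metric.ball (0 : EuclideanSpace ℝ (Fin d)) 1)).toReal := by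
    refine ENNReal.toReal_pos ?_ ?_
    · exact (Metric.measure_ball_pos volume 0 one_pos).ne'
    · exact measure_ball_lt_top.ne
  have hd0 : (0:ℝ) < d := by exact_mod_cast hd
  have hS : 0 < sphereArea d := mul_pos hd0 hball
  have : (0:ℝ) < (2*π)^d := by positivity
  exact div_pos hS (by positivity)

/-- The key quantitative bound: `|R_d(ρ) − C ρ^{1+2/d}| ≤ 2ρ`. -/
private lemma key_bound (d : ℕ) (hd : 1 ≤ d) {ρ : ℝ} (hρ : 0 < ρ) :
    |Rfun d ρ - ((((d:ℝ))^2 / (((d:ℝ)+2)*((d:ℝ)+4)))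
      * (sphereArea d / ((d:ℝ) * (2 * π) ^ d)) ^ (-(2/(d:ℝ))) * ρ ^ (1+2/(d:ℝ)))| ≤ 2 * ρ := by
  have hp : (0:ℝ) < (d:ℝ) := by exact_mod_cast hd
  set p : ℝ := (d:ℝ) with hpdef
  set c : ℝ := sphereArea d / ((d:ℝ) * (2 * π) ^ d) with hcdef
  have hc : 0 < c := c_pos d hd
  have hb : (0:ℝ) < ρ / c := div_pos hρ hc
  set X : ℝ := (ρ/c) ^ (2/p) with hXdef
  have hX : 0 < X := Real.rpow_pos_of_pos hb _
  have hXhalf : X ^ (p/2) = ρ / c := by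
    rw [hXdef, ← Real.rpow_mul hb.le]
    rw [show (2/p) * (p/2) = 1 by field_simp]
    exact Real.rpow_one _
  have hrpowmono : ∀ y z : ℝ, X ≤ y → y ≤ z → ρ ≤ c * z ^ (p/2) := by
    intro y z h1 h2
    have h3 : X ^ (p/2) ≤ z ^ (p/2) := Real.rpow_le_rpow hX.le (le_trans h1 h2) (by positivity)
    rw [hXhalf] at h3
    calc ρ = c * (ρ/c) := by field_simp
    _ ≤ c * z ^ (p/2) := by nlinarith
  -- the three integrands
  have hfvol_eq : ∀ e : ℝ, 1 ≤ e → fvol d e = c * (1+e) ^ (p/2) := by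
    intro e he
    unfold fvol
    rw [max_eq_right (by linarith : 1 - e ≤ 0), Real.zero_rpow (div_pos hp two_pos).ne',
      sub_zero, ← hpdef, ← hcdef]
  have hFint : IntegrableOn (fun e => (max (Real.sqrt ρ - Real.sqrt (fvol d e)) 0)^2)
      (Set.Ioi (0:ℝ)) := by
    refine integrableOn_cut (E₀ := max 1 X) hρ.le ?_ ?_
    · unfold fvol; fun_prop
    · intro x hx
      have h1 : (1:ℝ) ≤ x := le_of_lt (lt_of_le_of_lt (le_max_left _ _) hx)
      rw [hfvol_eq x h1]
      exact hrpowmono X (1+x) le_rfl (by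
        have : X ≤ x := le_of_lt (lt_of_le_of_lt (le_max_right _ _) hx)
        linarith)
  have hGint : IntegrableOn (fun e => (max (Real.sqrt ρ - Real.sqrt (c * (1+e) ^ (p/2))) 0)^2)
      (Set.Ioi (0:ℝ)) := by
    refine integrableOn_cut (E₀ := X) hρ.le (by fun_prop) ?_
    intro x hx
    exact hrpowmono x (1+x) hx.le (by linarith [hX])
  have hHint : IntegrableOn (fun x => (max (Real.sqrt ρ - Real.sqrt (c * x ^ (p/2))) 0)^2)
      (Set.Ioi (0:ℝ)) := by
    refine integrableOn_cut (E₀ := X) hρ.le (by fun_prop) ?_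
    intro x hx
    exact hrpowmono x x hx.le le_rfl
  -- evaluation of N
  have hN : ∫ x in Set.Ioi (0:ℝ), (max (Real.sqrt ρ - Real.sqrt (c * x ^ (p/2))) 0)^2
      = (p^2 / ((p+2)*(p+4))) * c ^ (-(2/p)) * ρ ^ (1+2/p) := N_eval hc hρ hp hHint
  -- translation
  have htrans : (∫ x in Set.Ioi (1:ℝ), (max (Real.sqrt ρ - Real.sqrt (c * x ^ (p/2))) 0)^2)
      = ∫ e in Set.Ioi (0:ℝ), (max (Real.sqrt ρ - Real.sqrt (c * (1+e) ^ (p/2))) 0)^2 := by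
    rw [← integral_indicator measurableSet_Ioi, ← integral_indicator measurableSet_Ioi,
      ← MeasureTheory.integral_add_right_eq_self
        (fun x => (Set.Ioi (1:ℝ)).indicator
          (fun x => (max (Real.sqrt ρ - Real.sqrt (c * x ^ (p/2))) 0)^2) x) 1]
    congr 1
    funext x
    simp only [Set.indicator_apply, Set.mem_Ioi]
    by_cases hx : 0 < x
    · rw [if_pos (by linarith), if_pos hx, show x + 1 = 1 + x by ring]
    · rw [if_neg (fun h => hx (by linarith)), if_neg hx]
  -- split
  have hsplit : (∫ x in Set.Ioi (0:ℝ), (max (Real.sqrt ρ - Real.sqrt (c * x ^ (p/2))) 0)^2)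
      = (∫ x in Set.Ioc (0:ℝ) 1, (max (Real.sqrt ρ - Real.sqrt (c * x ^ (p/2))) 0)^2)
        + ∫ x in Set.Ioi (1:ℝ), (max (Real.sqrt ρ - Real.sqrt (c * x ^ (p/2))) 0)^2 := by
    rw [← setIntegral_union (Set.Ioc_disjoint_Ioi le_rfl) measurableSet_Ioi
      (hHint.mono_set Set.Ioc_subset_Ioi_self) (hHint.mono_set (Set.Ioi_subset_Ioi zero_le_one)),
      Set.Ioc_union_Ioi_eq_Ioi zero_le_one]
  -- bound on the Ioc piece
  have bound1 : |∫ x in Set.Ioc (0:ℝ) 1, (max (Real.sqrt ρ - Real.sqrt (c * x ^ (p/2))) 0)^2|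
      ≤ ρ := by
    have h := norm_setIntegral_le_of_norm_le_const (μ := volume) (s := Set.Ioc (0:ℝ) 1)
      (C := ρ) (f := fun x => (max (Real.sqrt ρ - Real.sqrt (c * x ^ (p/2))) 0)^2)
      (by rw [Real.volume_Ioc]; exact ENNReal.ofReal_lt_top) ?_
    · rw [Real.norm_eq_abs] at h
      calc |∫ x in Set.Ioc (0:ℝ) 1, (max (Real.sqrt ρ - Real.sqrt (c * x ^ (p/2))) 0)^2|
          ≤ ρ * (volume (Set.Ioc (0:ℝ) 1)).toReal := h
      _ = ρ := by rw [Real.volume_Ioc]; norm_num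
    · intro x _
      rw [Real.norm_eq_abs, abs_of_nonneg (sq_nonneg _)]
      exact maxsq_le hρ.le
  -- bound on the difference Rfun − T
  have bound2 : |Rfun d ρ
      - ∫ e in Set.Ioi (0:ℝ), (max (Real.sqrt ρ - Real.sqrt (c * (1+e) ^ (p/2))) 0)^2| ≤ ρ := by
    have hsub : Rfun d ρ
        - (∫ e in Set.Ioi (0:ℝ), (max (Real.sqrt ρ - Real.sqrt (c * (1+e) ^ (p/2))) 0)^2)
        = ∫ e in Set.Ioi (0:ℝ), ((max (Real.sqrt ρ - Real.sqrt (fvol d e)) 0)^2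
            - (max (Real.sqrt ρ - Real.sqrt (c * (1+e) ^ (p/2))) 0)^2) := by
      unfold Rfun
      rw [integral_sub hFint hGint]
    rw [hsub]
    have hInd : Integrable (fun e => Set.indicator (Set.Ioc (0:ℝ) 1) (fun _ => ρ) e)
        (volume.restrict (Set.Ioi (0:ℝ))) := by
      rw [integrable_indicator_iff measurableSet_Ioc]
      exact integrableOn_const (lt_of_le_of_lt (Measure.restrict_apply_le _ _)
        measure_Ioc_lt_top).ne
    have hbnd : ‖∫ e in Set.Ioi (0:ℝ), ((max (Real.sqrt ρ - Real.sqrt (fvol d e)) 0)^2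
        - (max (Real.sqrt ρ - Real.sqrt (c * (1+e) ^ (p/2))) 0)^2)‖
        ≤ ∫ e in Set.Ioi (0:ℝ), Set.indicator (Set.Ioc (0:ℝ) 1) (fun _ => ρ) e := by
      refine norm_integral_le_of_norm_le hInd ?_
      filter_upwards [ae_restrict_mem measurableSet_Ioi] with x hx
      by_cases hx1 : x ≤ 1
      · rw [Set.indicator_of_mem (Set.mem_Ioc.mpr ⟨hx, hx1⟩), Real.norm_eq_abs]
        have hF1 : (0:ℝ) ≤ (max (Real.sqrt ρ - Real.sqrt (fvol d x)) 0)^2 := sq_nonneg _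
        have hF2 := maxsq_le (f := fvol d x) hρ.le
        have hG1 : (0:ℝ) ≤ (max (Real.sqrt ρ - Real.sqrt (c * (1+x) ^ (p/2))) 0)^2 := sq_nonneg _
        have hG2 := maxsq_le (f := c * (1+x) ^ (p/2)) hρ.le
        rw [abs_le]
        constructor <;> linarith
      · rw [hfvol_eq x (le_of_not_ge hx1), sub_self, Set.indicator_of_notMem (by simp [hx1])]
        simp
    rw [Real.norm_eq_abs] at hbnd
    refine le_trans hbnd (le_of_eq ?_)
    rw [integral_indicator measurableSet_Ioc, setIntegral_const, measureReal_def,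
      Measure.restrict_apply measurableSet_Ioc,
      Set.inter_eq_left.mpr Set.Ioc_subset_Ioi_self, Real.volume_Ioc]
    norm_num
  -- combine
  rw [← hN, hsplit, htrans]
  have : Rfun d ρ - ((∫ x in Set.Ioc (0:ℝ) 1, (max (Real.sqrt ρ - Real.sqrt (c * x ^ (p/2))) 0)^2)
      + ∫ e in Set.Ioi (0:ℝ), (max (Real.sqrt ρ - Real.sqrt (c * (1+e) ^ (p/2))) 0)^2)
      = (Rfun d ρ - ∫ e in Set.Ioi (0:ℝ), (max (Real.sqrt ρ - Real.sqrt (c * (1+e) ^ (p/2))) 0)^2)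
        - (∫ x in Set.Ioc (0:ℝ) 1, (max (Real.sqrt ρ - Real.sqrt (c * x ^ (p/2))) 0)^2) := by
    ring
  rw [this]
  refine le_trans (abs_sub _ _) (by linarith)

/-- `R_d(ρ) ~ (d/(d+4)) K_sc(d) ρ^{1+2/d}` as `ρ → ∞`. -/
theorem Rfun_asymptotics_infty (d : ℕ) (hd : 1 ≤ d) :
    Filter.Tendsto (fun ρ : ℝ => Rfun d ρ / ρ ^ (1 + 2 / (d : ℝ))) Filter.atTop
      (nhds (((d : ℝ) / (d + 4)) * Ksc d)) := by
  have hp : (0:ℝ) < (d:ℝ) := by exact_mod_cast hd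
  set p : ℝ := (d:ℝ) with hpdef
  set c : ℝ := sphereArea d / ((d:ℝ) * (2 * π) ^ d) with hcdef
  have hc : 0 < c := c_pos d hd
  have hS : 0 < sphereArea d := by
    have := c_pos d hd
    by_contra h
    push_neg at h
    have hD : (0:ℝ) < (d:ℝ) * (2*π)^d := by positivity
    nlinarith [div_nonpos_of_nonpos_of_nonneg h hD.le]
  have hconst : ((d:ℝ) / ((d:ℝ) + 4)) * Ksc d = (p^2 / ((p+2)*(p+4))) * c ^ (-(2/p)) := by
    unfold Ksc
    rw [show ((d:ℝ) * (2*π)^d / sphereArea d) = c⁻¹ by rw [hcdef, inv_div],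
      Real.inv_rpow hc.le, ← Real.rpow_neg hc.le, ← hpdef]
    have hp2 : p + 2 ≠ 0 := by positivity
    have hp4 : p + 4 ≠ 0 := by positivity
    field_simp
  rw [hconst]
  rw [← tendsto_sub_nhds_zero_iff]
  have hq : (0:ℝ) < 2/p := by positivity
  refine squeeze_zero_norm' ?_ (by simpa using (tendsto_rpow_neg_atTop hq).const_mul 2)
  filter_upwards [Filter.eventually_gt_atTop (0:ℝ)] with ρ hρ
  have hρq : (0:ℝ) < ρ ^ (1+2/p) := Real.rpow_pos_of_pos hρ _
  have hkey := key_bound d hd hρ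
  rw [← hpdef, ← hcdef] at hkey
  have heq : Rfun d ρ / ρ ^ (1+2/p) - (p^2 / ((p+2)*(p+4))) * c ^ (-(2/p))
      = (Rfun d ρ - (p^2 / ((p+2)*(p+4))) * c ^ (-(2/p)) * ρ ^ (1+2/p)) / ρ ^ (1+2/p) := by
    field_simp
  rw [Real.norm_eq_abs, heq, abs_div, abs_of_pos hρq]
  rw [div_le_iff₀ hρq]
  calc |Rfun d ρ - (p^2 / ((p+2)*(p+4))) * c ^ (-(2/p)) * ρ ^ (1+2/p)| ≤ 2 * ρ := hkey
  _ = 2 * ρ ^ (-(2/p)) * ρ ^ (1+2/p) := by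
      rw [mul_assoc, ← Real.rpow_add hρ, show -(2/p) + (1+2/p) = 1 by ring, Real.rpow_one]
end

section
/- The one-dimensional function Φ₁(x) := ∫_{−1}^{min(1, x−1)} dv / (√(1−v²)·√((v−x)²−1)), defined for x > 0, satisfies Φ₁(x) ~ −(1/2)·log|x−2| as x → 2; in particular Φ₁ is unbounded in every neighborhood of x = 2. -/
open Real

/-- `Φ₁(x) = ∫_{−1}^{min(1, x−1)} dv/(√(1−v²) √((v−x)²−1))`. -/
noncomputable def Phi1 (x : ℝ) : ℝ :=
  ∫ v in Set.Ioc (-1 : ℝ) (min 1 (x - 1)),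
    (Real.sqrt (1 - v ^ 2) * Real.sqrt ((v - x) ^ 2 - 1))⁻¹

open MeasureTheory Set

lemma I2int {T : ℝ} (hT : 0 ≤ T) :
    IntervalIntegrable (fun u => (Real.sqrt u)⁻¹) volume 0 T := by
  have hg : IntervalIntegrable (fun u : ℝ => u ^ (-(1/2) : ℝ)) volume 0 T :=
    intervalIntegral.intervalIntegrable_rpow' (by norm_num)
  refine hg.mono_fun ?_ ?_
  · exact (Real.continuous_sqrt.measurable.inv).aestronglyMeasurable
  · rw [Filter.EventuallyLE, ae_restrict_iff' measurableSet_uIoc]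
    refine Filter.Eventually.of_forall fun u hu => ?_
    rw [Set.uIoc_of_le hT] at hu
    have hu0 : 0 < u := hu.1
    have : (Real.sqrt u)⁻¹ = u ^ (-(1/2) : ℝ) := by
      rw [Real.rpow_neg hu0.le, ← Real.sqrt_eq_rpow]
    rw [Real.norm_eq_abs, Real.norm_eq_abs, this]

lemma I1int {ε : ℝ} (hε : 0 < ε) (T : ℝ) (hT : 0 ≤ T) :
    IntervalIntegrable (fun u => (Real.sqrt (u * (u + ε)))⁻¹) volume 0 T := by
  have hg : IntervalIntegrable (fun u : ℝ => (Real.sqrt ε)⁻¹ * u ^ (-(1/2) : ℝ)) volume 0 T :=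
    (intervalIntegral.intervalIntegrable_rpow' (by norm_num)).const_mul _
  refine hg.mono_fun ?_ ?_
  · apply Measurable.aestronglyMeasurable
    exact (measurable_id.mul (measurable_id.add_const ε)).sqrt.inv
  · rw [Filter.EventuallyLE, ae_restrict_iff' measurableSet_uIoc]
    refine Filter.Eventually.of_forall fun u hu => ?_
    rw [Set.uIoc_of_le hT] at hu
    have hu0 : 0 < u := hu.1
    have h1 : Real.sqrt (u * ε) ≤ Real.sqrt (u * (u + ε)) :=
      Real.sqrt_le_sqrt (by nlinarith)
    have h2 : (0:ℝ) < Real.sqrt (u * ε) := Real.sqrt_pos.2 (by positivity)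
    have h3 : (Real.sqrt (u * (u + ε)))⁻¹ ≤ (Real.sqrt (u * ε))⁻¹ :=
      inv_anti₀ h2 h1
    have heq : (Real.sqrt (u * ε))⁻¹ = (Real.sqrt ε)⁻¹ * u ^ (-(1/2) : ℝ) := by
      rw [Real.sqrt_mul hu0.le, mul_inv, Real.rpow_neg hu0.le, ← Real.sqrt_eq_rpow, mul_comm]
    rw [Real.norm_eq_abs, Real.norm_eq_abs, abs_of_nonneg (by positivity),
      abs_of_nonneg (by positivity)]
    calc (Real.sqrt (u * (u + ε)))⁻¹ ≤ (Real.sqrt (u * ε))⁻¹ := h3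
    _ = _ := heq

lemma I1val {ε : ℝ} (hε : 0 < ε) {T : ℝ} (hT : 0 ≤ T) :
    ∫ u in (0:ℝ)..T, (Real.sqrt (u * (u + ε)))⁻¹
      = 2 * Real.log (Real.sqrt T + Real.sqrt (T + ε)) - Real.log ε := by
  set F : ℝ → ℝ := fun u => 2 * Real.log (Real.sqrt u + Real.sqrt (u + ε)) with hF
  have hpos : ∀ u : ℝ, 0 ≤ u → 0 < Real.sqrt u + Real.sqrt (u + ε) := by
    intro u hu
    have h1 : 0 < Real.sqrt (u + ε) := Real.sqrt_pos.2 (by linarith)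
    have h2 := Real.sqrt_nonneg u
    linarith
  have hcont : ContinuousOn F (Icc 0 T) := by
    apply ContinuousOn.mul continuousOn_const
    apply ContinuousOn.log
    · exact (Real.continuous_sqrt.continuousOn).add
        ((continuous_id.add continuous_const).sqrt.continuousOn)
    · intro u hu; exact (hpos u hu.1).ne'
  have hderiv : ∀ u ∈ Ioo (0:ℝ) T,
      HasDerivWithinAt F ((Real.sqrt (u * (u + ε)))⁻¹) (Ioi u) u := by
    intro u hu
    have hu0 : 0 < u := hu.1
    have huε : 0 < u + ε := by linarith
    have ha : (0:ℝ) < Real.sqrt u := Real.sqrt_pos.2 hu0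
    have hb : (0:ℝ) < Real.sqrt (u + ε) := Real.sqrt_pos.2 huε
    have h1 : HasDerivAt (fun u : ℝ => Real.sqrt u + Real.sqrt (u + ε))
        (1 / (2 * Real.sqrt u) + 1 / (2 * Real.sqrt (u + ε))) u := by
      refine (Real.hasDerivAt_sqrt hu0.ne').add ?_
      have := ((Real.hasDerivAt_sqrt huε.ne').comp u ((hasDerivAt_id u).add_const ε))
      simpa [Function.comp_def] using this
    have h2 : HasDerivAt F
        (2 * ((1 / (2 * Real.sqrt u) + 1 / (2 * Real.sqrt (u + ε))) /
          (Real.sqrt u + Real.sqrt (u + ε)))) u :=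
      (h1.log (hpos u hu0.le).ne').const_mul 2
    have heq : 2 * ((1 / (2 * Real.sqrt u) + 1 / (2 * Real.sqrt (u + ε))) /
          (Real.sqrt u + Real.sqrt (u + ε))) = (Real.sqrt (u * (u + ε)))⁻¹ := by
      rw [Real.sqrt_mul hu0.le]
      field_simp
      ring
    rw [heq] at h2
    exact h2.hasDerivWithinAt
  have := intervalIntegral.integral_eq_sub_of_hasDeriv_right_of_le hT hcont hderiv
    (I1int hε T hT)
  rw [this]
  simp only [hF]
  have h0 : Real.sqrt 0 + Real.sqrt (0 + ε) = Real.sqrt ε := by simp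
  rw [h0, Real.log_sqrt hε.le]
  ring

lemma I2val {T : ℝ} (hT : 0 ≤ T) :
    ∫ u in (0:ℝ)..T, (Real.sqrt u)⁻¹ = 2 * Real.sqrt T := by
  set F : ℝ → ℝ := fun u => 2 * Real.sqrt u with hF
  have hcont : ContinuousOn F (Icc 0 T) :=
    (continuous_const.mul Real.continuous_sqrt).continuousOn
  have hderiv : ∀ u ∈ Ioo (0:ℝ) T,
      HasDerivWithinAt F ((Real.sqrt u)⁻¹) (Ioi u) u := by
    intro u hu
    have hu0 : 0 < u := hu.1
    have ha : (0:ℝ) < Real.sqrt u := Real.sqrt_pos.2 hu0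
    have h := (Real.hasDerivAt_sqrt hu0.ne').const_mul 2
    have heq : 2 * (1 / (2 * Real.sqrt u)) = (Real.sqrt u)⁻¹ := by
      field_simp
    rw [heq] at h
    exact h.hasDerivWithinAt
  have := intervalIntegral.integral_eq_sub_of_hasDeriv_right_of_le hT hcont hderiv (I2int hT)
  rw [this]
  simp only [hF]
  simp


lemma ca_bound {u : ℝ} (h1 : 0 < u) (h2 : u ≤ 1/4) :
    1/2 - u ≤ (Real.sqrt (4 + 8*u))⁻¹ := by
  set a := Real.sqrt (4 + 8*u) with hadef
  have ha2 : a^2 = 4 + 8*u := Real.sq_sqrt (by linarith)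
  have hapos : 0 < a := Real.sqrt_pos.2 (by linarith)
  have h : (1/2 - u) * a ≤ 1 := by
    nlinarith [sq_nonneg ((1/2 - u) * a - 1), sq_nonneg a]
  have heq : (1/2 - u) = ((1/2 - u) * a) * a⁻¹ := by
    rw [mul_assoc, mul_inv_cancel₀ hapos.ne', mul_one]
  have h2' := mul_le_mul_of_nonneg_right h (inv_nonneg.2 hapos.le)
  rw [one_mul] at h2'
  rw [heq]
  exact h2'

lemma cb_bound {u : ℝ} (h1 : 0 < u) (h2 : u ≤ 1/4) :
    (Real.sqrt (4 - 8*u))⁻¹ ≤ 1/2 + 2*u := by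
  set b := Real.sqrt (4 - 8*u) with hbdef
  have hb2 : b^2 = 4 - 8*u := Real.sq_sqrt (by linarith)
  have hbpos : 0 < b := Real.sqrt_pos.2 (by linarith)
  have h : 1 ≤ (1/2 + 2*u) * b := by
    nlinarith [sq_nonneg (b - 1), sq_nonneg b]
  have heq : b⁻¹ = 1 * b⁻¹ := by rw [one_mul]
  rw [heq]
  calc 1 * b⁻¹ ≤ ((1/2 + 2*u) * b) * b⁻¹ :=
    mul_le_mul_of_nonneg_right h (inv_nonneg.2 hbpos.le)
  _ = 1/2 + 2*u := by rw [mul_assoc, mul_inv_cancel₀ hbpos.ne', mul_one]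

lemma Bprod_bound {u v w : ℝ} (hu1 : 0 < u) (hu2 : u ≤ 1/4)
    (e1 : 2 - 2*u ≤ v) (e2 : v ≤ 2) (e3 : 2 - 2*u ≤ w) (e4 : w ≤ 2 + 2*u) :
    4 - 8*u ≤ v * w ∧ v * w ≤ 4 + 8*u := by
  constructor
  · nlinarith [mul_le_mul e1 e3 (by linarith) (by linarith)]
  · nlinarith [mul_le_mul e2 e4 (by linarith) (by norm_num)]

lemma final_assembly {η u₀ C₀ L c Φ : ℝ} (hη : 0 < η)
    (hu₀ : 0 < u₀) (hu₀4 : u₀ ≤ 1/4) (hu₀η : u₀ ≤ η/4)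
    (hC₀ : 2 ≤ C₀)
    (hLlb : (C₀ + 3/u₀) * (2/η) + C₀ + 1 < L)
    (hc_ub : c ≤ 2) (hc_lb : 2 - C₀ ≤ c)
    (hΦ_lb : (1/2 - u₀) * (L + c) ≤ Φ)
    (hΦ_ub : Φ ≤ (1/2 + 2*u₀) * (L + c) + 3/u₀) :
    |Φ / L - 1/2| < η := by
  have h3u : 0 < 3/u₀ := by positivity
  have hLpos : 0 < L := by
    have : 0 < (C₀ + 3/u₀) * (2/η) := by positivity
    linarith
  have hkey2 : C₀ + 3/u₀ < (η/2) * L := by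
    have h1 : (η/2) * ((C₀ + 3/u₀) * (2/η) + C₀ + 1) < (η/2) * L :=
      mul_lt_mul_of_pos_left hLlb (by positivity)
    have h2 : (η/2) * ((C₀ + 3/u₀) * (2/η) + C₀ + 1)
        = (C₀ + 3/u₀) + (η/2) * (C₀ + 1) := by
      field_simp; ring
    have h3 : 0 < (η/2) * (C₀ + 1) := by positivity
    linarith
  have huL : u₀ * L ≤ (η/4) * L := mul_le_mul_of_nonneg_right hu₀η hLpos.le
  have huc : u₀ * c ≤ 1/2 := by nlinarith
  have huc2 : -(1/2) - u₀ * C₀ ≤ u₀ * c := by nlinarith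
  rw [abs_lt]
  have hcC : -C₀ ≤ c := by linarith
  constructor
  · have h2 : (1/2 - η) * L < Φ := by nlinarith
    have h3 : 1/2 - η < Φ / L := (lt_div_iff₀ hLpos).2 h2
    linarith
  · have h2 : Φ < (1/2 + η) * L := by nlinarith
    have h3 : Φ / L < 1/2 + η := (div_lt_iff₀ hLpos).2 h2
    linarith

set_option maxHeartbeats 2000000 in
lemma main_est : ∀ η : ℝ, 0 < η → ∃ δ : ℝ, 0 < δ ∧ ∀ x : ℝ, x ≠ 2 → |x - 2| < δ →
    |Phi1 x / (-Real.log |x - 2|) - 1/2| < η := by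
  intro η hη
  set u₀ : ℝ := min (η/4) (1/4) with hu₀def
  have hu₀ : 0 < u₀ := lt_min (by positivity) (by norm_num)
  have hu₀4 : u₀ ≤ 1/4 := min_le_right _ _
  have hu₀η : u₀ ≤ η/4 := min_le_left _ _
  have hlogu₀ : Real.log u₀ < 0 := Real.log_neg hu₀ (lt_of_le_of_lt hu₀4 (by norm_num))
  set C₀ : ℝ := 2 - Real.log u₀ with hC₀def
  have hC₀ : 2 ≤ C₀ := by simp only [hC₀def]; linarith
  have h3u : 0 < 3/u₀ := by positivity
  set Lmin : ℝ := (C₀ + 3/u₀) * (2/η) + C₀ + 1 with hLmindef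
  have hLminpos : 0 < Lmin := by
    have h : 0 < (C₀ + 3/u₀) * (2/η) := by positivity
    rw [hLmindef]
    linarith
  refine ⟨min u₀ (Real.exp (-Lmin)), lt_min hu₀ (Real.exp_pos _), ?_⟩
  intro x hx2 hxd
  set ε := |x - 2| with hεdef
  have hε : 0 < ε := abs_pos.2 (sub_ne_zero.2 hx2)
  have hεu : ε < u₀ := lt_of_lt_of_le hxd (min_le_left _ _)
  have hL1 : Real.log ε < -Lmin := by
    have h1 : Real.log ε < Real.log (Real.exp (-Lmin)) :=
      Real.log_lt_log hε (lt_of_lt_of_le hxd (min_le_right _ _))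
    rwa [Real.log_exp] at h1
  set L := -Real.log ε with hLdef
  have hLlb : Lmin < L := by simp only [hLdef]; linarith
  have hLpos : 0 < L := lt_trans hLminpos hLlb
  -- basic geometry
  have hx78 : 7/4 < x ∧ x < 9/4 := by
    have := abs_lt.1 (lt_of_lt_of_le hεu hu₀4)
    constructor <;> linarith [this.1, this.2]
  set m := min 1 (x - 1) with hmdef
  obtain ⟨hkey, hm_ub, hm_lb, hxm_lb, hxm_ub⟩ :
      (∀ v : ℝ, (1 - v^2) * ((v - x)^2 - 1)
        = ((m - v) * (m - v + ε)) * ((1 + v) * (x + 1 - v))) ∧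
      m ≤ 1 ∧ 1 - ε ≤ m ∧ 2 - ε ≤ x + 1 - m ∧ x + 1 - m ≤ 2 + ε := by
    rcases le_total 2 x with hx' | hx'
    · have hm1 : m = 1 := by simp only [hmdef]; exact min_eq_left (by linarith)
      have hε1 : ε = x - 2 := by simp only [hεdef]; exact abs_of_nonneg (by linarith)
      refine ⟨fun v => by rw [hm1, hε1]; ring, by rw [hm1], by rw [hm1]; linarith,
        by rw [hm1, hε1]; linarith, by rw [hm1, hε1]; linarith⟩
    · have hm1 : m = x - 1 := by simp only [hmdef]; exact min_eq_right (by linarith)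
      have hε1 : ε = 2 - x := by
        simp only [hεdef]
        rw [abs_of_nonpos (show x - 2 ≤ 0 by linarith)]; ring
      refine ⟨fun v => by rw [hm1, hε1]; ring, by rw [hm1]; linarith,
        by rw [hm1, hε1]; linarith, by rw [hm1]; linarith, by rw [hm1, hε1]; linarith⟩
  have hm34 : 3/4 ≤ m := by linarith [hεu, hu₀4]
  set v₀ : ℝ := m - u₀ with hv₀def
  have hv₀m : v₀ ≤ m := by simp only [hv₀def]; linarith
  have hv₀lb : 1/2 ≤ v₀ := by simp only [hv₀def]; linarith
  have hneg1v₀ : (-1:ℝ) ≤ v₀ := by linarith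
  set f : ℝ → ℝ := fun v => (Real.sqrt (1 - v^2) * Real.sqrt ((v - x)^2 - 1))⁻¹ with hfdef
  set g : ℝ → ℝ := fun v => (Real.sqrt ((m - v) * (m - v + ε)))⁻¹ with hgdef
  have hPhi : Phi1 x = ∫ v in Set.Ioc (-1:ℝ) m, f v := rfl
  have hfnn : ∀ v, 0 ≤ f v := fun v => by simp only [hfdef]; positivity
  have hgnn : ∀ v, 0 ≤ g v := fun v => by simp only [hgdef]; positivity
  -- sqrt splitting
  have hsplit : ∀ v ∈ Set.Icc (-1:ℝ) m,
      Real.sqrt (1 - v^2) * Real.sqrt ((v - x)^2 - 1)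
        = Real.sqrt ((m - v) * (m - v + ε)) * Real.sqrt ((1 + v) * (x + 1 - v)) := by
    intro v hv
    have h1 : (0:ℝ) ≤ 1 - v^2 := by
      have habs : |v| ≤ 1 := abs_le.2 ⟨hv.1, le_trans hv.2 hm_ub⟩
      have h2' := (sq_le_one_iff_abs_le_one (a := v)).2 habs
      linarith
    have h2 : (0:ℝ) ≤ (m - v) * (m - v + ε) :=
      mul_nonneg (by linarith [hv.2]) (by linarith [hv.2, hε.le])
    rw [← Real.sqrt_mul h1, ← Real.sqrt_mul h2, hkey v]
  -- bounds for B on the main interval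
  have hBbound : ∀ v ∈ Set.Ioc v₀ m,
      4 - 8*u₀ ≤ (1 + v) * (x + 1 - v) ∧ (1 + v) * (x + 1 - v) ≤ 4 + 8*u₀ := by
    intro v hv
    have h1 : v₀ < v := hv.1
    have h2 : v ≤ m := hv.2
    have e1 : 2 - 2*u₀ ≤ 1 + v := by simp only [hv₀def] at h1; linarith [hεu.le, hm_lb]
    have e2 : 1 + v ≤ 2 := by linarith [hm_ub]
    have e3 : 2 - 2*u₀ ≤ x + 1 - v := by linarith [hxm_lb, hεu.le]
    have e4 : x + 1 - v ≤ 2 + 2*u₀ := by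
      simp only [hv₀def] at h1; linarith [hxm_ub, hεu.le]
    exact Bprod_bound hu₀ hu₀4 e1 e2 e3 e4
  set ca : ℝ := (Real.sqrt (4 + 8*u₀))⁻¹ with hcadef
  set cb : ℝ := (Real.sqrt (4 - 8*u₀))⁻¹ with hcbdef
  have h4u₀pos : (0:ℝ) < 4 - 8*u₀ := by linarith
  -- pointwise bounds on main interval
  have hmain_lb : ∀ v ∈ Set.Ioc v₀ m, ca * g v ≤ f v := by
    intro v hv
    have hIcc : v ∈ Set.Icc (-1:ℝ) m := ⟨by linarith [hv.1], hv.2⟩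
    obtain ⟨hB1, hB2⟩ := hBbound v hv
    have hBpos : 0 < Real.sqrt ((1 + v) * (x + 1 - v)) :=
      Real.sqrt_pos.2 (by linarith)
    have hle : ca ≤ (Real.sqrt ((1 + v) * (x + 1 - v)))⁻¹ :=
      inv_anti₀ hBpos (Real.sqrt_le_sqrt hB2)
    have hmm := mul_le_mul_of_nonneg_right hle (hgnn v)
    have heq : f v = (Real.sqrt ((1 + v) * (x + 1 - v)))⁻¹ * g v := by
      simp only [hfdef, hgdef]
      rw [hsplit v hIcc, mul_inv, mul_comm]
    rw [heq]
    exact hmm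
  have hmain_ub : ∀ v ∈ Set.Ioc v₀ m, f v ≤ cb * g v := by
    intro v hv
    have hIcc : v ∈ Set.Icc (-1:ℝ) m := ⟨by linarith [hv.1], hv.2⟩
    obtain ⟨hB1, hB2⟩ := hBbound v hv
    have hBpos : 0 < Real.sqrt (4 - 8*u₀) := Real.sqrt_pos.2 h4u₀pos
    have hle : (Real.sqrt ((1 + v) * (x + 1 - v)))⁻¹ ≤ cb :=
      inv_anti₀ hBpos (Real.sqrt_le_sqrt hB1)
    have hmm := mul_le_mul_of_nonneg_right hle (hgnn v)
    have heq : f v = (Real.sqrt ((1 + v) * (x + 1 - v)))⁻¹ * g v := by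
      simp only [hfdef, hgdef]
      rw [hsplit v hIcc, mul_inv, mul_comm]
    rw [heq]
    exact hmm
  -- pointwise bound on rest interval
  have hrest_ptw : ∀ v ∈ Set.Ioc (-1:ℝ) v₀, f v ≤ u₀⁻¹ * (Real.sqrt (v + 1))⁻¹ := by
    intro v hv
    have hIcc : v ∈ Set.Icc (-1:ℝ) m := ⟨hv.1.le, le_trans hv.2 hv₀m⟩
    have h1v : 0 < v + 1 := by linarith [hv.1]
    have hA : u₀ ≤ Real.sqrt ((m - v) * (m - v + ε)) := by
      have h1 : u₀ * u₀ ≤ (m - v) * (m - v + ε) := by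
        have h2' := hv.2
        simp only [hv₀def] at h2'
        have e1 : u₀ ≤ m - v := by linarith
        have e2 : u₀ ≤ m - v + ε := by linarith [hε.le]
        exact mul_le_mul e1 e2 hu₀.le (by linarith)
      calc u₀ = Real.sqrt (u₀ * u₀) := by rw [Real.sqrt_mul_self hu₀.le]
      _ ≤ _ := Real.sqrt_le_sqrt h1
    have hB : Real.sqrt (v + 1) ≤ Real.sqrt ((1 + v) * (x + 1 - v)) := by
      have h1 : v + 1 ≤ (1 + v) * (x + 1 - v) := by
        have e1 : (1:ℝ) ≤ x + 1 - v := by linarith [hx78.1, le_trans hv.2 hv₀m, hm_ub]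
        have e2 : (1 + v) * 1 ≤ (1 + v) * (x + 1 - v) :=
          mul_le_mul_of_nonneg_left e1 (by linarith)
        linarith
      exact Real.sqrt_le_sqrt h1
    have hd : u₀ * Real.sqrt (v + 1)
        ≤ Real.sqrt ((m - v) * (m - v + ε)) * Real.sqrt ((1 + v) * (x + 1 - v)) :=
      mul_le_mul hA hB (Real.sqrt_nonneg _) (Real.sqrt_nonneg _)
    have hdpos : 0 < u₀ * Real.sqrt (v + 1) :=
      mul_pos hu₀ (Real.sqrt_pos.2 h1v)
    have heq : f v = (Real.sqrt ((m - v) * (m - v + ε)) * Real.sqrt ((1 + v) * (x + 1 - v)))⁻¹ := by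
      simp only [hfdef]; rw [hsplit v hIcc]
    rw [heq, ← mul_inv]
    exact inv_anti₀ hdpos hd
  -- integrability of g on main interval and the value of its integral
  have hg_int : IntegrableOn g (Set.Ioc v₀ m) volume := by
    have h1 := (I1int hε u₀ hu₀.le).comp_sub_left m
    rw [sub_zero] at h1
    have h2 : m - u₀ = v₀ := by rw [hv₀def]
    rw [h2] at h1
    exact (intervalIntegrable_iff_integrableOn_Ioc_of_le hv₀m).1 h1.symm
  set c : ℝ := 2 * Real.log (Real.sqrt u₀ + Real.sqrt (u₀ + ε)) with hcdef
  have hJ : ∫ v in Set.Ioc v₀ m, g v = L + c := by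
    rw [← intervalIntegral.integral_of_le hv₀m]
    have h1 := intervalIntegral.integral_comp_sub_left
      (a := v₀) (b := m) (fun u => (Real.sqrt (u * (u + ε)))⁻¹) m
    rw [sub_self] at h1
    have h2 : m - v₀ = u₀ := by rw [hv₀def]; ring
    rw [h2] at h1
    calc ∫ v in v₀..m, g v = ∫ v in v₀..m, (Real.sqrt ((m - v) * (m - v + ε)))⁻¹ := rfl
    _ = ∫ u in (0:ℝ)..u₀, (Real.sqrt (u * (u + ε)))⁻¹ := h1
    _ = L + c := by rw [I1val hε hu₀.le, hcdef, hLdef]; ring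
  -- measurability of f
  have hf_meas : Measurable f := by
    simp only [hfdef]
    have c1 : Continuous fun v : ℝ => Real.sqrt (1 - v^2) :=
      (continuous_const.sub (continuous_pow 2)).sqrt
    have c2 : Continuous fun v : ℝ => Real.sqrt ((v - x)^2 - 1) :=
      (((continuous_id.sub continuous_const).pow 2).sub continuous_const).sqrt
    exact ((c1.mul c2).measurable).inv
  -- integrability of f on the two pieces
  have hf_int_main : IntegrableOn f (Set.Ioc v₀ m) volume := by
    refine Integrable.mono' (hg_int.const_mul cb) hf_meas.aestronglyMeasurable ?_
    rw [ae_restrict_iff' measurableSet_Ioc]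
    exact Filter.Eventually.of_forall fun v hv => by
      rw [Real.norm_eq_abs, abs_of_nonneg (hfnn v)]; exact hmain_ub v hv
  have hdom_int : IntegrableOn (fun v => u₀⁻¹ * (Real.sqrt (v + 1))⁻¹)
      (Set.Ioc (-1:ℝ) v₀) volume := by
    have h1 := (I2int (by linarith : (0:ℝ) ≤ v₀ + 1)).comp_add_right 1
    rw [zero_sub] at h1
    have h2 : v₀ + 1 - 1 = v₀ := by ring
    rw [h2] at h1
    exact ((intervalIntegrable_iff_integrableOn_Ioc_of_le hneg1v₀).1 h1).const_mul _
  have hf_int_rest : IntegrableOn f (Set.Ioc (-1:ℝ) v₀) volume := by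
    refine Integrable.mono' hdom_int hf_meas.aestronglyMeasurable ?_
    rw [ae_restrict_iff' measurableSet_Ioc]
    exact Filter.Eventually.of_forall fun v hv => by
      rw [Real.norm_eq_abs, abs_of_nonneg (hfnn v)]; exact hrest_ptw v hv
  -- splitting the integral
  have hsplit_int : Phi1 x
      = (∫ v in Set.Ioc (-1:ℝ) v₀, f v) + ∫ v in Set.Ioc v₀ m, f v := by
    rw [hPhi, ← Set.Ioc_union_Ioc_eq_Ioc hneg1v₀ hv₀m]
    exact setIntegral_union (Set.Ioc_disjoint_Ioc_of_le le_rfl) measurableSet_Ioc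
      hf_int_rest hf_int_main
  -- bounds for the two pieces
  have hrest_nonneg : 0 ≤ ∫ v in Set.Ioc (-1:ℝ) v₀, f v :=
    setIntegral_nonneg measurableSet_Ioc fun v _ => hfnn v
  have hrest_le : ∫ v in Set.Ioc (-1:ℝ) v₀, f v ≤ 3/u₀ := by
    have h1 : ∫ v in Set.Ioc (-1:ℝ) v₀, f v
        ≤ ∫ v in Set.Ioc (-1:ℝ) v₀, u₀⁻¹ * (Real.sqrt (v + 1))⁻¹ :=
      setIntegral_mono_on hf_int_rest hdom_int measurableSet_Ioc hrest_ptw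
    have h2 : ∫ v in Set.Ioc (-1:ℝ) v₀, u₀⁻¹ * (Real.sqrt (v + 1))⁻¹
        = u₀⁻¹ * (2 * Real.sqrt (v₀ + 1)) := by
      rw [MeasureTheory.integral_const_mul, ← intervalIntegral.integral_of_le hneg1v₀]
      congr 1
      have h3 := intervalIntegral.integral_comp_add_right
        (a := (-1:ℝ)) (b := v₀) (fun u => (Real.sqrt u)⁻¹) 1
      rw [neg_add_cancel] at h3
      rw [h3, I2val (by linarith)]
    have h4 : Real.sqrt (v₀ + 1) ≤ 3/2 := by
      have h5 : Real.sqrt (v₀ + 1) ≤ Real.sqrt (9/4) := Real.sqrt_le_sqrt (by linarith [hm_ub, hu₀])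
      have h6 : Real.sqrt (9/4 : ℝ) = 3/2 := by
        rw [show (9/4 : ℝ) = (3/2)^2 by norm_num, Real.sqrt_sq (by norm_num)]
      linarith [h5, h6.le]
    have h7 : u₀⁻¹ * (2 * Real.sqrt (v₀ + 1)) ≤ u₀⁻¹ * 3 := by
      apply mul_le_mul_of_nonneg_left (by linarith) (by positivity)
    calc ∫ v in Set.Ioc (-1:ℝ) v₀, f v ≤ _ := h1
    _ = _ := h2
    _ ≤ u₀⁻¹ * 3 := h7
    _ = 3/u₀ := by rw [div_eq_mul_inv, mul_comm]
  have hmain_lb_int : ca * (L + c) ≤ ∫ v in Set.Ioc v₀ m, f v := by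
    have h1 : ∫ v in Set.Ioc v₀ m, ca * g v ≤ ∫ v in Set.Ioc v₀ m, f v :=
      setIntegral_mono_on (hg_int.const_mul ca) hf_int_main measurableSet_Ioc hmain_lb
    rwa [MeasureTheory.integral_const_mul, hJ] at h1
  have hmain_ub_int : (∫ v in Set.Ioc v₀ m, f v) ≤ cb * (L + c) := by
    have h1 : ∫ v in Set.Ioc v₀ m, f v ≤ ∫ v in Set.Ioc v₀ m, cb * g v :=
      setIntegral_mono_on hf_int_main (hg_int.const_mul cb) measurableSet_Ioc hmain_ub
    rwa [MeasureTheory.integral_const_mul, hJ] at h1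
  -- bounds on c
  have htpos : 0 < Real.sqrt u₀ + Real.sqrt (u₀ + ε) := by
    have : 0 < Real.sqrt u₀ := Real.sqrt_pos.2 hu₀
    linarith [Real.sqrt_nonneg (u₀ + ε)]
  have hc_ub : c ≤ 2 := by
    have h1 : Real.sqrt u₀ + Real.sqrt (u₀ + ε) ≤ 2 := by
      have e1 : Real.sqrt u₀ ≤ 1 := by
        rw [show (1:ℝ) = Real.sqrt 1 by simp]
        exact Real.sqrt_le_sqrt (by linarith)
      have e2 : Real.sqrt (u₀ + ε) ≤ 1 := by
        rw [show (1:ℝ) = Real.sqrt 1 by simp]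
        exact Real.sqrt_le_sqrt (by linarith [hεu.le, hu₀4])
      linarith
    have h2 := Real.log_le_sub_one_of_pos htpos
    simp only [hcdef]
    linarith
  have hc_lb : Real.log u₀ ≤ c := by
    have h1 : Real.sqrt u₀ ≤ Real.sqrt u₀ + Real.sqrt (u₀ + ε) := by
      linarith [Real.sqrt_nonneg (u₀ + ε)]
    have h2 : Real.log (Real.sqrt u₀) ≤ Real.log (Real.sqrt u₀ + Real.sqrt (u₀ + ε)) :=
      Real.log_le_log (Real.sqrt_pos.2 hu₀) h1
    rw [Real.log_sqrt hu₀.le] at h2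
    simp only [hcdef]
    linarith
  have hLc : 0 ≤ L + c := by
    have : -C₀ ≤ c := by simp only [hC₀def]; linarith
    have h2 : C₀ ≤ Lmin := by
      have : 0 < (C₀ + 3/u₀) * (2/η) := by positivity
      simp only [hLmindef]; linarith
    linarith
  -- final assembly
  have hca := ca_bound hu₀ hu₀4
  have hcb := cb_bound hu₀ hu₀4
  rw [← hcadef] at hca
  rw [← hcbdef] at hcb
  have hΦ_lb : (1/2 - u₀) * (L + c) ≤ Phi1 x := by
    have h1 : (1/2 - u₀) * (L + c) ≤ ca * (L + c) :=
      mul_le_mul_of_nonneg_right hca hLc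
    rw [hsplit_int]
    exact (h1.trans hmain_lb_int).trans (le_add_of_nonneg_left hrest_nonneg)
  have hΦ_ub : Phi1 x ≤ (1/2 + 2*u₀) * (L + c) + 3/u₀ := by
    have h1 : cb * (L + c) ≤ (1/2 + 2*u₀) * (L + c) :=
      mul_le_mul_of_nonneg_right hcb hLc
    rw [hsplit_int]
    exact (add_le_add hrest_le (hmain_ub_int.trans h1)).trans_eq (add_comm _ _)
  have hLlb' : (C₀ + 3/u₀) * (2/η) + C₀ + 1 < L := by rw [← hLmindef]; exact hLlb
  have hc_lb' : 2 - C₀ ≤ c := by rw [hC₀def]; linarith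
  exact final_assembly hη hu₀ hu₀4 hu₀η hC₀ hLlb' hc_ub hc_lb' hΦ_lb hΦ_ub


/-- `Φ₁(x) ~ −(1/2) log|x−2|` as `x → 2`; in particular `Φ₁` is
unbounded in every neighborhood of `x = 2`. -/
theorem Phi1_asymptotics_two :
    Filter.Tendsto (fun x : ℝ => Phi1 x / (-Real.log |x - 2|))
      (nhdsWithin 2 {x : ℝ | x ≠ 2}) (nhds (1 / 2)) ∧
    ∀ ε > 0, ∀ M : ℝ, ∃ x : ℝ, 0 < x ∧ x ≠ 2 ∧ |x - 2| < ε ∧ M < Phi1 x := by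
  constructor
  · rw [Metric.tendsto_nhdsWithin_nhds]
    intro η hη
    obtain ⟨δ, hδ, h⟩ := main_est η hη
    refine ⟨δ, hδ, fun {x} hx hdist => ?_⟩
    rw [Real.dist_eq] at hdist ⊢
    exact h x hx hdist
  · intro ε hε M
    obtain ⟨δ, hδ, h⟩ := main_est (1/4) (by norm_num)
    set r := min (min (δ/2) (ε/2)) (Real.exp (-(4*|M|+4))) with hrdef
    have hrpos : 0 < r := lt_min (lt_min (by linarith) (by linarith)) (Real.exp_pos _)
    have hr1 : r ≤ 1 := by
      refine le_trans (min_le_right _ _) ?_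
      rw [show (1:ℝ) = Real.exp 0 by rw [Real.exp_zero]]
      exact Real.exp_le_exp.2 (by linarith [abs_nonneg M])
    have hxpos : (0:ℝ) < 2 - r := by linarith
    have hxne : (2:ℝ) - r ≠ 2 := by
      intro hcontra
      have : r = 0 := by linarith
      linarith
    have habs : |2 - r - 2| = r := by
      rw [show (2 - r - 2 : ℝ) = -r by ring, abs_neg, abs_of_pos hrpos]
    have hrδ : |2 - r - 2| < δ := by
      rw [habs]
      calc r ≤ δ/2 := le_trans (min_le_left _ _) (min_le_left _ _)
      _ < δ := by linarith
    have hrε : |2 - r - 2| < ε := by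
      rw [habs]
      calc r ≤ ε/2 := le_trans (min_le_left _ _) (min_le_right _ _)
      _ < ε := by linarith
    have hL : 4*|M| + 4 ≤ -Real.log |2 - r - 2| := by
      rw [habs]
      have h1 : Real.log r ≤ Real.log (Real.exp (-(4*|M|+4))) :=
        Real.log_le_log hrpos (min_le_right _ _)
      rw [Real.log_exp] at h1
      linarith
    have hLpos : 0 < -Real.log |2 - r - 2| := by
      have := abs_nonneg M
      linarith
    have h5 := (abs_lt.1 (h (2 - r) hxne hrδ)).1
    have h6 : 1/4 < Phi1 (2 - r) / (-Real.log |2 - r - 2|) := by linarith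
    have h7 : (1/4) * (-Real.log |2 - r - 2|) < Phi1 (2 - r) :=
      (lt_div_iff₀ hLpos).1 h6
    refine ⟨2 - r, hxpos, hxne, hrε, ?_⟩
    have h8 : M ≤ |M| := le_abs_self M
    nlinarith [abs_nonneg M]
end

section
/- The function Φ₁ satisfies Φ₁(x) ~ π/x as x → ∞, where Φ₁(x) = ∫_{−1}^{1} dv/(√(1−v²)·√((v−x)²−1)) for x > 2. -/
open Real MeasureTheory Filter

lemma aux_intervalIntegrable :
    IntervalIntegrable (fun v : ℝ => (Real.sqrt (1 - v ^ 2))⁻¹) volume (-1) 1 := by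
  have base : IntervalIntegrable (fun x : ℝ => x ^ (-(1/2) : ℝ)) volume 0 1 :=
    intervalIntegral.intervalIntegrable_rpow' (by norm_num)
  have hmeas : ∀ a b : ℝ, AEStronglyMeasurable (fun v : ℝ => (Real.sqrt (1 - v ^ 2))⁻¹)
      (volume.restrict (Set.uIoc a b)) := by
    intro a b
    exact ((Real.continuous_sqrt.comp (by continuity)).aemeasurable.inv).aestronglyMeasurable
  have h1 : IntervalIntegrable (fun v : ℝ => (Real.sqrt (1 - v ^ 2))⁻¹) volume 0 1 := by
    have g_int : IntervalIntegrable (fun v : ℝ => (1 - v) ^ (-(1/2) : ℝ)) volume 0 1 := by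
      have := base.comp_sub_left 1
      simpa using this.symm
    refine g_int.mono_fun (hmeas 0 1) ?_
    have : Set.uIoc (0:ℝ) 1 = Set.Ioc 0 1 := Set.uIoc_of_le (by norm_num)
    rw [this]
    filter_upwards [ae_restrict_mem measurableSet_Ioc] with v hv
    have hv0 : 0 < v := hv.1
    have hv1 : v ≤ 1 := hv.2
    have h1v : 0 ≤ 1 - v := by linarith
    have hrw : (1 - v) ^ (-(1/2) : ℝ) = (Real.sqrt (1 - v))⁻¹ := by
      rw [Real.rpow_neg h1v, Real.sqrt_eq_rpow]
    rw [Real.norm_eq_abs, Real.norm_eq_abs, hrw,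
      abs_of_nonneg (by positivity), abs_of_nonneg (by positivity)]
    have hle : 1 - v ≤ 1 - v ^ 2 := by nlinarith
    rcases eq_or_lt_of_le hv1 with h | h
    · simp [h]
    · exact inv_anti₀ (Real.sqrt_pos.2 (by linarith)) (Real.sqrt_le_sqrt hle)
  have h2 : IntervalIntegrable (fun v : ℝ => (Real.sqrt (1 - v ^ 2))⁻¹) volume (-1) 0 := by
    have g_int : IntervalIntegrable (fun v : ℝ => (v + 1) ^ (-(1/2) : ℝ)) volume (-1) 0 := by
      have := base.comp_add_right 1
      simpa using this
    refine g_int.mono_fun (hmeas (-1) 0) ?_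
    have : Set.uIoc (-1:ℝ) 0 = Set.Ioc (-1) 0 := Set.uIoc_of_le (by norm_num)
    rw [this]
    filter_upwards [ae_restrict_mem measurableSet_Ioc] with v hv
    have hv0 : -1 < v := hv.1
    have hv1 : v ≤ 0 := hv.2
    have h1v : 0 ≤ v + 1 := by linarith
    have hrw : (v + 1) ^ (-(1/2) : ℝ) = (Real.sqrt (v + 1))⁻¹ := by
      rw [Real.rpow_neg h1v, Real.sqrt_eq_rpow]
    rw [Real.norm_eq_abs, Real.norm_eq_abs, hrw,
      abs_of_nonneg (by positivity), abs_of_nonneg (by positivity)]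
    have hle : v + 1 ≤ 1 - v ^ 2 := by nlinarith
    exact inv_anti₀ (Real.sqrt_pos.2 (by linarith)) (Real.sqrt_le_sqrt hle)
  exact h2.trans h1

lemma aux_integrableOn :
    IntegrableOn (fun v : ℝ => (Real.sqrt (1 - v ^ 2))⁻¹) (Set.Ioc (-1 : ℝ) 1) volume :=
  (intervalIntegrable_iff_integrableOn_Ioc_of_le (by norm_num)).1 aux_intervalIntegrable

lemma aux_integral_value :
    ∫ v in Set.Ioc (-1 : ℝ) 1, (Real.sqrt (1 - v ^ 2))⁻¹ = π := by
  have h := intervalIntegral.integral_eq_sub_of_hasDerivAt_of_tendsto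
    (f := Real.arcsin) (f' := fun v : ℝ => (Real.sqrt (1 - v ^ 2))⁻¹)
    (a := -1) (b := 1) (by norm_num) (fa := -(π/2)) (fb := π/2)
    (fun x hx => by
      simpa [one_div] using Real.hasDerivAt_arcsin (ne_of_gt hx.1) (ne_of_lt hx.2))
    aux_intervalIntegrable
    (by
      refine Filter.Tendsto.mono_left ?_ nhdsWithin_le_nhds
      simpa [Real.arcsin_neg_one] using Real.continuous_arcsin.tendsto (-1))
    (by
      refine Filter.Tendsto.mono_left ?_ nhdsWithin_le_nhds
      simpa [Real.arcsin_one] using Real.continuous_arcsin.tendsto 1)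
  rw [intervalIntegral.integral_of_le (by norm_num : (-1:ℝ) ≤ 1)] at h
  rw [h]; ring

/-- `Φ₁(x) = ∫_{−1}^{1} dv/(√(1−v²) √((v−x)²−1))` satisfies
`Φ₁(x) ~ π/x` as `x → ∞`, i.e. `x Φ₁(x) → π`. -/
theorem Phi1_asymptotics_infty :
    Filter.Tendsto
      (fun x : ℝ => x * ∫ v in Set.Ioc (-1 : ℝ) 1,
        (Real.sqrt (1 - v ^ 2) * Real.sqrt ((v - x) ^ 2 - 1))⁻¹)
      Filter.atTop (nhds π) := by
  have key : Filter.Tendsto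
      (fun x : ℝ => ∫ v in Set.Ioc (-1 : ℝ) 1,
        x * (Real.sqrt (1 - v ^ 2) * Real.sqrt ((v - x) ^ 2 - 1))⁻¹)
      Filter.atTop (nhds (∫ v in Set.Ioc (-1 : ℝ) 1, (Real.sqrt (1 - v ^ 2))⁻¹)) := by
    apply MeasureTheory.tendsto_integral_filter_of_dominated_convergence
      (bound := fun v => 2 * (Real.sqrt (1 - v ^ 2))⁻¹)
    · -- measurability
      filter_upwards with x
      exact (aemeasurable_const.mul
        (((Real.continuous_sqrt.comp (by continuity)).aemeasurable.mul
          (Real.continuous_sqrt.comp (by continuity)).aemeasurable).inv)).aestronglyMeasurable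
    · -- bound
      filter_upwards [eventually_ge_atTop (3:ℝ)] with x hx
      filter_upwards [ae_restrict_mem measurableSet_Ioc] with v hv
      have hx0 : (0:ℝ) < x := by linarith
      have hv1 : -1 < v := hv.1
      have hv2 : v ≤ 1 := hv.2
      set a := Real.sqrt (1 - v ^ 2) with ha
      set b := Real.sqrt ((v - x) ^ 2 - 1) with hb
      have ha0 : 0 ≤ a := Real.sqrt_nonneg _
      have hbig : (x/2)^2 ≤ (v - x) ^ 2 - 1 := by nlinarith
      have hbge : x/2 ≤ b := by
        have := Real.sqrt_le_sqrt hbig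
        rwa [Real.sqrt_sq (by linarith)] at this
      have hb0 : 0 < b := lt_of_lt_of_le (by linarith) hbge
      rw [Real.norm_eq_abs, abs_of_nonneg (by positivity)]
      have hbinv : b⁻¹ ≤ (x/2)⁻¹ := inv_anti₀ (by linarith) hbge
      calc x * (a * b)⁻¹ = x * b⁻¹ * a⁻¹ := by rw [mul_inv]; ring
        _ ≤ x * (x/2)⁻¹ * a⁻¹ := by
            apply mul_le_mul_of_nonneg_right _ (by positivity)
            exact mul_le_mul_of_nonneg_left hbinv (le_of_lt hx0)
        _ = 2 * a⁻¹ := by field_simp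
    · -- integrability of bound
      exact aux_integrableOn.const_mul 2
    · -- pointwise limit
      filter_upwards [ae_restrict_mem measurableSet_Ioc] with v hv
      have hv1 : -1 < v := hv.1
      have hv2 : v ≤ 1 := hv.2
      rcases eq_or_lt_of_le hv2 with h1 | h1
      · -- v = 1 : everything is zero
        subst h1
        simp only [one_pow, sub_self, Real.sqrt_zero, zero_mul, inv_zero, mul_zero]
        exact tendsto_const_nhds
      · set a := Real.sqrt (1 - v ^ 2) with ha
        have ha0 : 0 < a := Real.sqrt_pos.2 (by nlinarith)
        have hratio : Filter.Tendsto
            (fun x : ℝ => Real.sqrt ((v - x) ^ 2 - 1) / x) Filter.atTop (nhds 1) := by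
          have hinner : Filter.Tendsto
              (fun x : ℝ => ((v - x) ^ 2 - 1) / x ^ 2) Filter.atTop (nhds 1) := by
            have h0 : Filter.Tendsto (fun x : ℝ => x⁻¹) Filter.atTop (nhds 0) :=
              tendsto_inv_atTop_zero
            have : Filter.Tendsto (fun x : ℝ => (v * x⁻¹ - 1) ^ 2 - (x⁻¹) ^ 2)
                Filter.atTop (nhds ((v * 0 - 1) ^ 2 - 0 ^ 2)) := by
              apply Filter.Tendsto.sub
              · exact ((h0.const_mul v).sub tendsto_const_nhds).pow 2
              · exact h0.pow 2
            norm_num at this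
            apply this.congr'
            filter_upwards [eventually_gt_atTop (0:ℝ)] with x hx
            have hx0 : x ≠ 0 := ne_of_gt hx
            field_simp
          have hsq : Filter.Tendsto
              (fun x : ℝ => Real.sqrt (((v - x) ^ 2 - 1) / x ^ 2)) Filter.atTop (nhds 1) := by
            have := (Real.continuous_sqrt.tendsto 1).comp hinner
            simpa [Function.comp_def] using this
          apply hsq.congr'
          filter_upwards [eventually_ge_atTop (3:ℝ)] with x hx
          have hge : (0:ℝ) ≤ (v - x) ^ 2 - 1 := by nlinarith
          rw [Real.sqrt_div hge (x ^ 2), Real.sqrt_sq (by linarith : (0:ℝ) ≤ x)]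
        have hfin := (hratio.inv₀ one_ne_zero).const_mul (a⁻¹)
        rw [inv_one, mul_one] at hfin
        refine hfin.congr fun x => ?_
        rw [inv_div, mul_inv]
        ring
  rw [aux_integral_value] at key
  refine key.congr fun x => ?_
  exact MeasureTheory.integral_const_mul x _
end
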